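/- Every s-t path through the gadget portion of the Knapsack reduction graph (i.e., not using the direct arc (s,t) or the detour node v) corresponds bijectively to a vector x ∈ {0,1}^n, and its cost equals ((c¹)^T x, (c²)^T(𝟏 − x)). -/

import Mathlib

/-- Vertices of the gadget portion of the Knapsack reduction graph: `a i` are the nodes
`v_{i+1}¹` (so `a 0 = s` and `a n = t`) and `b i` are the nodes `v_{i+1}²`. -/
inductive GVertex (n : ℕ) where
  | a : Fin (n + 1) → GVertex n
  | b : Fin n → GVertex n
deriving DecidableEq

/-- Arcs of the gadget graph with their biobjective costs: `(v_i¹, v_i²)` costs `(c¹_i, 0)`,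
`(v_i², v_{i+1}¹)` costs `(0,0)`, and `(v_i¹, v_{i+1}¹)` costs `(0, c²_i)`. -/
def GEdge (n : ℕ) (c1 c2 : Fin n → ℕ) : GVertex n → GVertex n → ℕ × ℕ → Prop :=
  fun u w cost =>
    (∃ i : Fin n, u = .a i.castSucc ∧ w = .b i ∧ cost = (c1 i, 0)) ∨
    (∃ i : Fin n, u = .b i ∧ w = .a i.succ ∧ cost = (0, 0)) ∨
    (∃ i : Fin n, u = .a i.castSucc ∧ w = .a i.succ ∧ cost = (0, c2 i))

/-- `ArcPath E u w l`: `l` is the list of arcs (source, target, cost) of a path from `u`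
to `w` in the graph with arc relation `E`. -/
inductive ArcPath {α : Type*} (E : α → α → ℕ × ℕ → Prop) : α → α → List (α × α × (ℕ × ℕ)) → Prop
  | nil (u : α) : ArcPath E u u []
  | cons {u v w : α} {c : ℕ × ℕ} {l : List (α × α × (ℕ × ℕ))} :
      E u v c → ArcPath E v w l → ArcPath E u w ((u, v, c) :: l)

/-- The total cost of a path given by its list of arcs. -/
def pathCost {α : Type*} (l : List (α × α × (ℕ × ℕ))) : ℕ × ℕ :=
  ((l.map fun e => e.2.2.1).sum, (l.map fun e => e.2.2.2).sum)

variable {n : ℕ} (c1 c2 : Fin n → ℕ)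

def seg (x : Fin n → Bool) (i : Fin n) : List (GVertex n × GVertex n × (ℕ × ℕ)) :=
  if x i then [(.a i.castSucc, .b i, (c1 i, 0)), (.b i, .a i.succ, ((0:ℕ), (0:ℕ)))]
  else [(.a i.castSucc, .a i.succ, ((0:ℕ), c2 i))]

def pathFrom (x : Fin n → Bool) (k : ℕ) : List (GVertex n × GVertex n × (ℕ × ℕ)) :=
  ((List.finRange n).drop k).flatMap (seg c1 c2 x)

lemma pathFrom_last (x : Fin n → Bool) : pathFrom c1 c2 x n = [] := by
  rw [pathFrom, List.drop_eq_nil_of_le (by simp)]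
  rfl

lemma drop_finRange (k : ℕ) (hk : k < n) :
    (List.finRange n).drop k = ⟨k, hk⟩ :: (List.finRange n).drop (k+1) := by
  rw [List.drop_eq_getElem_cons (by simpa using hk)]
  simp

lemma pathFrom_succ (x : Fin n → Bool) (k : ℕ) (hk : k < n) :
    pathFrom c1 c2 x k = seg c1 c2 x ⟨k, hk⟩ ++ pathFrom c1 c2 x (k+1) := by
  rw [pathFrom, drop_finRange k hk]
  simp [List.flatMap, pathFrom, List.flatMap]

lemma mem_drop_finRange {k : ℕ} {i : Fin n} (h : i ∈ (List.finRange n).drop k) : k ≤ i.val := by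
  obtain ⟨j, hj, rfl⟩ := List.getElem_of_mem h
  simp at hj ⊢

lemma pathFrom_congr {x y : Fin n → Bool} (k : ℕ) (h : ∀ i : Fin n, k ≤ i.val → x i = y i) :
    pathFrom c1 c2 x k = pathFrom c1 c2 y k := by
  unfold pathFrom
  apply List.flatMap_congr
  intro i hi
  simp [seg, h i (mem_drop_finRange hi)]

lemma arcPath_pathFrom (x : Fin n → Bool) : ∀ (k : ℕ) (hk : k ≤ n),
    ArcPath (GEdge n c1 c2) (.a ⟨k, Nat.lt_succ_of_le hk⟩) (.a (Fin.last n))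
      (pathFrom c1 c2 x k) := by
  suffices h : ∀ (N k : ℕ), n - k = N → ∀ (hk : k ≤ n),
      ArcPath (GEdge n c1 c2) (.a ⟨k, Nat.lt_succ_of_le hk⟩) (.a (Fin.last n))
        (pathFrom c1 c2 x k) by
    intro k hk; exact h _ k rfl hk
  intro N
  induction N with
  | zero =>
    intro k hN hk
    have hkn : k = n := by omega
    subst hkn
    rw [pathFrom_last]
    exact ArcPath.nil _
  | succ N ih =>
    intro k hN hk
    have hkn : k < n := by omega
    rw [pathFrom_succ c1 c2 x k hkn]
    have ih' := ih (k+1) (by omega) (by omega)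
    by_cases hx : x ⟨k, hkn⟩ = true
    · rw [seg, if_pos hx]
      exact ArcPath.cons (Or.inl ⟨⟨k, hkn⟩, rfl, rfl, rfl⟩)
        (ArcPath.cons (Or.inr (Or.inl ⟨⟨k, hkn⟩, rfl, rfl, rfl⟩)) ih')
    · rw [seg, if_neg hx]
      exact ArcPath.cons (Or.inr (Or.inr ⟨⟨k, hkn⟩, rfl, rfl, rfl⟩)) ih'

lemma mem_seg (x : Fin n → Bool) (i j : Fin n) :
    ((.a i.castSucc, .b i, (c1 i, 0)) : GVertex n × GVertex n × (ℕ × ℕ)) ∈ seg c1 c2 x j ↔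
      i = j ∧ x i = true := by
  cases hx : x j <;>
    simp [seg, hx, Prod.ext_iff, Fin.castSucc_inj] <;>
    rintro rfl <;> simp_all

lemma mem_pathFrom0 (x : Fin n → Bool) (i : Fin n) :
    ((.a i.castSucc, .b i, (c1 i, 0)) : GVertex n × GVertex n × (ℕ × ℕ)) ∈
      pathFrom c1 c2 x 0 ↔ x i = true := by
  simp [pathFrom, List.mem_flatMap, mem_seg]

lemma pathCost_append {α : Type*} (l1 l2 : List (α × α × (ℕ × ℕ))) :
    pathCost (l1 ++ l2) = pathCost l1 + pathCost l2 := by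
  simp [pathCost, Prod.ext_iff]

lemma pathCost_seg (x : Fin n → Bool) (i : Fin n) :
    pathCost (seg c1 c2 x i) = if x i then (c1 i, 0) else (0, c2 i) := by
  cases hx : x i <;> simp [seg, hx, pathCost]

lemma pathCost_pathFrom0 (x : Fin n → Bool) :
    pathCost (pathFrom c1 c2 x 0) =
      (∑ i, if x i then c1 i else 0, ∑ i, if x i then 0 else c2 i) := by
  have key : ∀ (L : List (Fin n)),
      pathCost (L.flatMap (seg c1 c2 x)) = (L.map fun i => pathCost (seg c1 c2 x i)).sum := by
    intro L
    induction L with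
    | nil => simp [pathCost]
    | cons a L ih => simp [List.flatMap_cons, pathCost_append, ih]
  rw [pathFrom, List.drop_zero, key]
  have : ∀ i : Fin n, pathCost (seg c1 c2 x i) =
      ((if x i then c1 i else 0 : ℕ), (if x i then 0 else c2 i : ℕ)) := by
    intro i
    rw [pathCost_seg]
    cases x i <;> simp
  simp only [this]
  rw [← Fin.sum_univ_def]
  ext <;> simp [Prod.fst_sum, Prod.snd_sum]

lemma unique_path : ∀ (N : ℕ) (l : List (GVertex n × GVertex n × (ℕ × ℕ))),
    l.length ≤ N → ∀ (k : ℕ) (hk : k ≤ n),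
    ArcPath (GEdge n c1 c2) (.a ⟨k, Nat.lt_succ_of_le hk⟩) (.a (Fin.last n)) l →
    ∃ x : Fin n → Bool, l = pathFrom c1 c2 x k := by
  intro N
  induction N with
  | zero =>
    intro l hl k hk hp
    have hl0 : l = [] := by simpa using hl
    subst hl0
    cases hp with
    | nil =>
      exact ⟨fun _ => true, (pathFrom_last c1 c2 _).symm⟩
  | succ N ih =>
    intro l hl k hk hp
    cases hp with
    | nil =>
      exact ⟨fun _ => true, (pathFrom_last c1 c2 _).symm⟩
    | cons he hp' =>
      rcases he with ⟨i, hu, hv, hc⟩ | ⟨i, hu, hv, hc⟩ | ⟨i, hu, hv, hc⟩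
      · subst hv hc
        have hik : (i : ℕ) = k := by
          injection hu with h
          exact (congrArg Fin.val h).symm
        have hkn : k < n := by omega
        cases hp' with
        | cons he2 hp'' =>
          rename_i v' c' l'
          rcases he2 with ⟨i', hu2, hv2, hc2⟩ | ⟨i', hu2, hv2, hc2⟩ | ⟨i', hu2, hv2, hc2⟩
          · exact absurd hu2 (by simp)
          · subst hv2 hc2
            obtain rfl : i = i' := by injection hu2
            clear hu2
            have hsucc : i.succ = (⟨k+1, by omega⟩ : Fin (n+1)) := by
              ext; simp [hik]
            rw [hsucc] at hp''
            obtain ⟨x, hx⟩ := ih _ (by simp at hl ⊢; omega) (k+1) (by omega) hp''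
            refine ⟨fun j => if j = i then true else x j, ?_⟩
            rw [pathFrom_succ c1 c2 _ k hkn]
            have hii : (⟨k, hkn⟩ : Fin n) = i := by ext; simp [hik]
            rw [hii]
            have hcongr : pathFrom c1 c2 (fun j => if j = i then true else x j) (k+1)
                = pathFrom c1 c2 x (k+1) := by
              apply pathFrom_congr
              intro j hj
              have hji : j ≠ i := by
                intro h; subst h; omega
              simp [hji]
            rw [hcongr, ← hx, seg]
            simp [hu, hsucc]
          · exact absurd hu2 (by simp)
      · exact absurd hu (by simp)
      · subst hv hc
        have hik : (i : ℕ) = k := by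
          injection hu with h
          exact (congrArg Fin.val h).symm
        have hkn : k < n := by omega
        have hsucc : i.succ = (⟨k+1, by omega⟩ : Fin (n+1)) := by
          ext; simp [hik]
        rw [hsucc] at hp'
        obtain ⟨x, hx⟩ := ih _ (by simp at hl ⊢; omega) (k+1) (by omega) hp'
        refine ⟨fun j => if j = i then false else x j, ?_⟩
        rw [pathFrom_succ c1 c2 _ k hkn]
        have hii : (⟨k, hkn⟩ : Fin n) = i := by ext; simp [hik]
        rw [hii]
        have hcongr : pathFrom c1 c2 (fun j => if j = i then false else x j) (k+1)
            = pathFrom c1 c2 x (k+1) := by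
          apply pathFrom_congr
          intro j hj
          have hji : j ≠ i := by
            intro h; subst h; omega
          simp [hji]
        rw [hcongr, ← hx, seg]
        simp [hu, hsucc]


/-- The `s`-`t`-paths through the gadget graph are in bijection with the vectors
`x ∈ {0,1}ⁿ` (where `x_i = 1` iff the path uses the arc `(v_i¹, v_i²)`), and the path
corresponding to `x` has cost `((c¹)ᵀx, (c²)ᵀ(𝟏 − x))`. -/
theorem stmt_5 (n : ℕ) (c1 c2 : Fin n → ℕ) :
    ∃ e : {l : List (GVertex n × GVertex n × (ℕ × ℕ)) //
            ArcPath (GEdge n c1 c2) (.a 0) (.a (Fin.last n)) l} ≃ (Fin n → Bool),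
      ∀ p, (∀ i : Fin n, e p i = true ↔ ((.a i.castSucc, .b i, (c1 i, 0)) ∈ p.1)) ∧
        pathCost p.1 =
          (∑ i, if e p i then c1 i else 0, ∑ i, if e p i then 0 else c2 i) := by

  have h0 : (GVertex.a 0 : GVertex n) = .a ⟨0, Nat.lt_succ_of_le (Nat.zero_le n)⟩ := by
    congr 1
  refine ⟨{
    toFun := fun p i => decide ((GVertex.a i.castSucc, GVertex.b i, (c1 i, 0)) ∈ p.1)
    invFun := fun x => ⟨pathFrom c1 c2 x 0, by
      rw [h0]; exact arcPath_pathFrom c1 c2 x 0 (Nat.zero_le n)⟩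
    left_inv := ?_
    right_inv := ?_ }, ?_⟩
  · rintro ⟨l, hl⟩
    apply Subtype.ext
    rw [h0] at hl
    obtain ⟨x, hx⟩ := unique_path c1 c2 l.length l le_rfl 0 (Nat.zero_le n) hl
    have hdec : (fun i => decide ((GVertex.a i.castSucc, GVertex.b i, (c1 i, 0)) ∈
        pathFrom c1 c2 x 0)) = x := by
      funext i
      simp [mem_pathFrom0]
    simp only [hx, hdec]
  · intro x
    funext i
    simp [mem_pathFrom0]
  · rintro ⟨l, hl⟩
    constructor
    · intro i
      simp
    · rw [h0] at hl
      obtain ⟨x, hx⟩ := unique_path c1 c2 l.length l le_rfl 0 (Nat.zero_le n) hl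
      subst hx
      rw [pathCost_pathFrom0]
      have hdec : ∀ i, (decide ((GVertex.a i.castSucc, GVertex.b i, (c1 i, 0)) ∈
          pathFrom c1 c2 x 0)) = x i := by
        intro i
        simp [mem_pathFrom0]
      simp only [Equiv.coe_fn_mk, hdec]
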